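/- Let Q be a bounded quasinilpotent operator on a complex Banach space X. If the limsup as t → +∞ of ‖e^{tQ}‖ is finite for every direction, i.e., G_Q = ℂ, then Q = 0. -/

import Mathlib

open NormedSpace Filter Set Complex

lemma norm_exp_le_exp_norm' {X : Type*} [NormedAddCommGroup X] [NormedSpace ℂ X]
    [CompleteSpace X] (a : X →L[ℂ] X) : ‖exp a‖ ≤ Real.exp ‖a‖ := by
  have hsum : Summable fun n : ℕ => ‖((Nat.factorial n : ℂ))⁻¹ • a ^ n‖ :=
    NormedSpace.norm_expSeries_summable' a
  have hterm : ∀ n : ℕ, ‖((Nat.factorial n : ℂ))⁻¹ • a ^ n‖ ≤ ‖a‖ ^ n / Nat.factorial n := by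
    intro n
    calc ‖((Nat.factorial n : ℂ))⁻¹ • a ^ n‖
        ≤ ‖((Nat.factorial n : ℂ))⁻¹‖ * ‖a ^ n‖ := ContinuousLinearMap.opNorm_smul_le _ _
      _ ≤ ((Nat.factorial n : ℝ))⁻¹ * ‖a‖ ^ n := by
          rw [norm_inv, Complex.norm_natCast]
          gcongr
          cases n with
          | zero => simpa using (by exact ContinuousLinearMap.norm_id_le : ‖(1 : X →L[ℂ] X)‖ ≤ 1)
          | succ m => exact norm_pow_le' a m.succ_pos
      _ = ‖a‖ ^ n / Nat.factorial n := by rw [div_eq_inv_mul]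
  calc ‖exp a‖ = ‖∑' n : ℕ, ((Nat.factorial n : ℂ))⁻¹ • a ^ n‖ := by rw [exp_eq_tsum ℂ]
    _ ≤ ∑' n : ℕ, ‖((Nat.factorial n : ℂ))⁻¹ • a ^ n‖ := norm_tsum_le_tsum_norm hsum
    _ ≤ ∑' n : ℕ, ‖a‖ ^ n / Nat.factorial n :=
        Summable.tsum_le_tsum hterm hsum (Real.summable_pow_div_factorial ‖a‖)
    _ = Real.exp ‖a‖ := by rw [Real.exp_eq_exp_ℝ, NormedSpace.exp_eq_tsum_div]

theorem semigroupBounded_all_directions_implies_zero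
    {X : Type*} [NormedAddCommGroup X] [NormedSpace ℂ X] [CompleteSpace X]
    (Q : X →L[ℂ] X) (hQ : spectrum ℂ Q = {0})
    (h : ∀ z : ℂ, Filter.IsBoundedUnder (· ≤ ·) Filter.atTop
        (fun t : ℝ => ‖NormedSpace.exp (((t : ℂ) * z) • Q)‖)) :
    Q = 0 := by
  set f : ℂ → (X →L[ℂ] X) := fun w => exp (w • Q) with hf
  have hdiff : Differentiable ℂ f := fun w =>
    (hasDerivAt_exp_smul_const Q w).differentiableAt
  -- bound along each ray
  have hray : ∀ z : ℂ, ∃ C : ℝ, ∀ t : ℝ, 0 ≤ t → ‖f ((t : ℂ) * z)‖ ≤ C := by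
    intro z
    obtain ⟨b, hb⟩ := h z
    rw [eventually_map, eventually_atTop] at hb
    obtain ⟨T, hT⟩ := hb
    have hcont : ContinuousOn (fun t : ℝ => f ((t : ℂ) * z)) (Icc 0 T) :=
      (hdiff.continuous.comp ((continuous_ofReal.mul continuous_const))).continuousOn
    obtain ⟨C', hC'⟩ := (isCompact_Icc (a := (0:ℝ)) (b := T)).exists_bound_of_continuousOn hcont
    refine ⟨max b C', fun t ht => ?_⟩
    rcases le_total t T with hle | hle
    · exact le_trans (hC' t ⟨ht, hle⟩) (le_max_right _ _)
    · exact le_trans (hT t hle) (le_max_left _ _)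
  -- bound on imaginary axis
  obtain ⟨C₁, hC₁⟩ := hray I
  obtain ⟨C₂, hC₂⟩ := hray (-I)
  set C : ℝ := max C₁ C₂ with hC
  have him : ∀ x : ℝ, ‖f ((x : ℂ) * I)‖ ≤ C := by
    intro x
    rcases le_total 0 x with hx | hx
    · exact le_trans (hC₁ x hx) (le_max_left _ _)
    · have hxi : ((x : ℂ) * I) = ((-x : ℝ) : ℂ) * (-I) := by push_cast; ring
      rw [hxi]
      exact le_trans (hC₂ (-x) (by linarith)) (le_max_right _ _)
  -- growth bound
  have key : ∀ w : ℂ, ‖f w‖ ≤ Real.exp (‖Q‖ * ‖w‖) := by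
    intro w
    calc ‖f w‖ ≤ Real.exp ‖w • Q‖ := norm_exp_le_exp_norm' _
      _ ≤ Real.exp (‖Q‖ * ‖w‖) := by
          refine Real.exp_le_exp.2 ?_
          calc ‖w • Q‖ ≤ ‖w‖ * ‖Q‖ := _root_.norm_smul_le w Q
            _ = ‖Q‖ * ‖w‖ := by rw [mul_comm]
  have hexp : ∀ S : Set ℂ, f =O[Bornology.cobounded ℂ ⊓ 𝓟 S]
      fun w => Real.exp (‖Q‖ * ‖w‖ ^ (1 : ℝ)) := by
    intro S
    refine Asymptotics.IsBigO.of_bound 1 (Eventually.of_forall fun w => ?_)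
    rw [one_mul, Real.norm_eq_abs, abs_of_pos (Real.exp_pos _), Real.rpow_one]
    exact key w
  -- right half-plane bound
  have hright : ∀ w : ℂ, 0 ≤ w.re → ‖f w‖ ≤ C := by
    intro w hw
    refine PhragmenLindelof.right_half_plane_of_bounded_on_real
      hdiff.diffContOnCl ⟨1, one_lt_two, ‖Q‖, hexp _⟩ ?_ him hw
    obtain ⟨b, hb⟩ := h 1
    refine ⟨b, ?_⟩
    rw [eventually_map] at hb ⊢
    refine hb.mono fun t ht => ?_
    show ‖exp (((t : ℂ)) • Q)‖ ≤ b
    rw [show ((t : ℂ)) = (t : ℂ) * 1 by ring]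
    exact ht
  -- left half-plane bound
  have hleft : ∀ w : ℂ, w.re ≤ 0 → ‖f w‖ ≤ C := by
    intro w hw
    have hneg : (0:ℝ) ≤ (-w).re := by simpa using hw
    have hres := PhragmenLindelof.right_half_plane_of_bounded_on_real
      (f := fun u => f (-u)) (C := C)
      ((hdiff.comp (differentiable_neg)).diffContOnCl)
      ⟨1, one_lt_two, ‖Q‖, ?_⟩ ?_ ?_ hneg
    · simpa only [neg_neg] using hres
    · refine Asymptotics.IsBigO.of_bound 1 (Eventually.of_forall fun u => ?_)
      rw [one_mul, Real.norm_eq_abs, abs_of_pos (Real.exp_pos _), Real.rpow_one]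
      calc ‖f (-u)‖ ≤ Real.exp (‖Q‖ * ‖-u‖) := key (-u)
        _ = Real.exp (‖Q‖ * ‖u‖) := by rw [norm_neg]
    · obtain ⟨b, hb⟩ := h (-1)
      refine ⟨b, ?_⟩
      rw [eventually_map] at hb ⊢
      refine hb.mono fun t ht => ?_
      show ‖exp ((-(t : ℂ)) • Q)‖ ≤ b
      rw [show (-(t : ℂ)) = (t : ℂ) * (-1) by ring]
      exact ht
    · intro x
      show ‖f (-((x : ℂ) * I))‖ ≤ C
      rw [show -((x : ℂ) * I) = ((-x : ℝ) : ℂ) * I by push_cast; ring]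
      exact him (-x)
  -- Liouville
  have hbdd : Bornology.IsBounded (range f) := by
    refine (isBounded_iff_forall_norm_le).2 ⟨C, ?_⟩
    rintro _ ⟨w, rfl⟩
    rcases le_total 0 w.re with hw | hw
    · exact hright w hw
    · exact hleft w hw
  have hconst : ∀ w : ℂ, f w = f 0 := fun w =>
    hdiff.apply_eq_apply_of_bounded hbdd w 0
  have h1 : HasDerivAt f (exp ((0:ℂ) • Q) * Q) 0 := hasDerivAt_exp_smul_const Q 0
  have h2 : HasDerivAt f 0 0 := by
    have hcf : f = fun _ => f 0 := funext hconst
    rw [hcf]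
    exact hasDerivAt_const _ _
  have heq := h1.unique h2
  rwa [zero_smul, NormedSpace.exp_zero, one_mul] at heq
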